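/- Let R be a discrete valuation ring with uniformizer π, and let B = R × R with diagonal subring considerations as follows. Let A ⊆ R × R be the subring of pairs (α₁, α₂) with α₁ ≡ α₂ mod (π). If I ⊆ A is the ideal of pairs (α₁, α₂) ∈ A with α₁ ≡ 0 and α₂ ≡ 0 mod (π), then I/(π,π)A is generated by the image of a single element of the form (π^p λ, 0) with λ not divisible by π, for a unique integer p > 0 — in fact p = 1 and λ a unit works, and any generator of this form has p = 1. -/

import Mathlib

open Ideal

variable (R : Type*) [CommRing R] [IsDomain R] [IsDiscreteValuationRing R] (π : R)

/-- The subring `A ⊆ R × R` of pairs `(α₁, α₂)` with `α₁ ≡ α₂ mod (π)`. -/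
def Asub : Subring (R × R) where
  carrier := {x | x.1 - x.2 ∈ Ideal.span {π}}
  zero_mem' := by simp
  one_mem' := by simp
  add_mem' := by
    intro a b ha hb
    simp only [Set.mem_setOf_eq, Prod.fst_add, Prod.snd_add] at *
    have : a.1 + b.1 - (a.2 + b.2) = (a.1 - a.2) + (b.1 - b.2) := by ring
    rw [this]; exact Ideal.add_mem _ ha hb
  neg_mem' := by
    intro a ha
    simp only [Set.mem_setOf_eq, Prod.fst_neg, Prod.snd_neg] at *
    have : -a.1 - -a.2 = -(a.1 - a.2) := by ring
    rw [this]; exact neg_mem ha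
  mul_mem' := by
    intro a b ha hb
    simp only [Set.mem_setOf_eq, Prod.fst_mul, Prod.snd_mul] at *
    have : a.1 * b.1 - a.2 * b.2 = a.1 * (b.1 - b.2) + b.2 * (a.1 - a.2) := by ring
    rw [this]
    exact Ideal.add_mem _ (Ideal.mul_mem_left _ _ hb) (Ideal.mul_mem_left _ _ ha)

/-- The ideal `I ⊆ A` of pairs `(α₁, α₂)` with `α₁ ≡ 0` and `α₂ ≡ 0 mod (π)`. -/
def Isub : Ideal (Asub R π) where
  carrier := {x | (x : R × R).1 ∈ Ideal.span {π} ∧ (x : R × R).2 ∈ Ideal.span {π}}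
  zero_mem' := by simp
  add_mem' := by
    intro a b ha hb
    exact ⟨Ideal.add_mem _ ha.1 hb.1, Ideal.add_mem _ ha.2 hb.2⟩
  smul_mem' := by
    intro c x hx
    exact ⟨Ideal.mul_mem_left _ _ hx.1, Ideal.mul_mem_left _ _ hx.2⟩

theorem stmt3 (hπ : Irreducible π)
    (hmem1 : ((π * 1, (0 : R)) : R × R) ∈ Asub R π)
    (hmemπ : ((π, π) : R × R) ∈ Asub R π) :
    -- p = 1 with λ = 1 (a unit not divisible by π) works:
    (Isub R π = Ideal.span {(⟨(π * 1, 0), hmem1⟩ : Asub R π), ⟨(π, π), hmemπ⟩}) ∧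
    -- uniqueness of p: any generator of this form has exponent 1:
    (∀ (q : ℕ) (μ : R), 0 < q → ¬ π ∣ μ →
      ∀ hq : ((π ^ q * μ, (0 : R)) : R × R) ∈ Asub R π,
        Isub R π = Ideal.span {(⟨(π ^ q * μ, 0), hq⟩ : Asub R π), ⟨(π, π), hmemπ⟩} →
        q = 1) := by
  constructor
  · apply le_antisymm
    · rintro ⟨z, hz⟩ ⟨h1, h2⟩
      simp only at h1 h2
      rw [Ideal.mem_span_singleton] at h1 h2
      obtain ⟨a, ha⟩ := h1
      obtain ⟨b, hb⟩ := h2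
      rw [Ideal.mem_span_pair]
      refine ⟨⟨(a - b, a - b), show (a-b) - (a-b) ∈ Ideal.span {π} by simp⟩, ⟨(b, b), show b - b ∈ Ideal.span {π} by simp⟩, ?_⟩
      apply Subtype.ext
      show ((a - b, a - b) : R × R) * (π * 1, 0) + ((b, b) : R × R) * (π, π) = z
      rw [Prod.ext_iff]
      constructor
      · show (a - b) * (π * 1) + b * π = z.1
        rw [ha]; ring
      · show (a - b) * 0 + b * π = z.2
        rw [hb]; ring
    · rw [Ideal.span_le]
      rintro x (rfl | rfl)
      · exact ⟨Ideal.mem_span_singleton.2 ⟨1, by ring⟩, Ideal.mem_span_singleton.2 ⟨0, by ring⟩⟩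
      · exact ⟨Ideal.mem_span_singleton.2 ⟨1, by ring⟩, Ideal.mem_span_singleton.2 ⟨1, by ring⟩⟩
  · intro q μ hq0 hμ hq hspan
    by_contra hne
    obtain ⟨k, rfl⟩ : ∃ k, q = k + 2 := ⟨q - 2, by omega⟩
    have hg : (⟨(π * 1, 0), hmem1⟩ : Asub R π) ∈ Isub R π :=
      ⟨Ideal.mem_span_singleton.2 ⟨1, rfl⟩, by simp⟩
    rw [hspan, Ideal.mem_span_pair] at hg
    obtain ⟨⟨u, hu⟩, ⟨v, hv⟩, heq⟩ := hg
    have heq' : (u * (π ^ (k + 2) * μ, 0) + v * (π, π) : R × R) = (π * 1, 0) :=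
      congrArg Subtype.val heq
    rw [Prod.ext_iff] at heq'
    obtain ⟨e1, e2⟩ := heq'
    simp only [Prod.fst_add, Prod.fst_mul, Prod.snd_add, Prod.snd_mul] at e1 e2
    -- e2 : u.2 * 0 + v.2 * π = 0, so v.2 = 0
    have hv2 : v.2 = 0 := by
      have : v.2 * π = 0 := by linear_combination e2
      exact (mul_eq_zero.1 this).resolve_right hπ.ne_zero
    -- v ∈ Asub : v.1 - v.2 ∈ span π, so π ∣ v.1
    have hv1 : π ∣ v.1 := by
      have := Ideal.mem_span_singleton.1 hv
      rwa [hv2, sub_zero] at this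
    obtain ⟨c, hc⟩ := hv1
    have key : π * (u.1 * (π ^ (k + 1) * μ) + c * π) = π * 1 := by
      have hp : π ^ (k + 2) = π * π ^ (k + 1) := by ring
      rw [hp] at e1
      linear_combination e1 - π * hc
    have keq : u.1 * (π ^ (k + 1) * μ) + c * π = 1 := mul_left_cancel₀ hπ.ne_zero key
    have : π ∣ 1 := by
      refine ⟨u.1 * (π ^ k * μ) + c, ?_⟩
      rw [← keq]; ring
    exact hπ.not_isUnit (isUnit_of_dvd_one this)
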